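/- Let (ŷ_{∞f},û_{∞f}) be an admissible pair on [0,+∞) for the dynamics f with ŷ_{∞f}(0) = x, whose trajectory is bounded (‖ŷ_{∞f}(t)‖ ≤ b for all t ≥ 0) and whose shifted costs ∫₀ᵀ w(ŷ_{∞f}(t),û_{∞f}(t)) dt are bounded uniformly in T ≥ 0. If strict dissipativity holds, then ŷ_{∞f}(t) → ȳ as t → +∞. -/

import Mathlib

open MeasureTheory Filter Topology Metric Set

noncomputable section

/-- Euclidean state/control spaces. -/
abbrev Euc (n : ℕ) := EuclideanSpace ℝ (Fin n)

/-- An admissible pair `(y,u)` on `[0,T]` for the dynamics `f` with control constraint set `Ω`: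
`u` is measurable, `Ω`-valued a.e. on `[0,T]`, and `y t = y 0 + ∫₀ᵗ f (y s) (u s) ds` on `[0,T]`. -/
def IsAdmissible {n p : ℕ} (f : Euc n → Euc p → Euc n) (Ω : Set (Euc p)) (T : ℝ)
    (y : ℝ → Euc n) (u : ℝ → Euc p) : Prop :=
  Measurable u ∧ (∀ᵐ t ∂(volume.restrict (Icc (0:ℝ) T)), u t ∈ Ω) ∧
  ∀ t ∈ Icc (0:ℝ) T, y t = y 0 + ∫ s in (0:ℝ)..t, f (y s) (u s)

/-- An admissible pair `(y,u)` on `[0,∞)` for the dynamics `f`. -/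
def IsAdmissibleInf {n p : ℕ} (f : Euc n → Euc p → Euc n) (Ω : Set (Euc p))
    (y : ℝ → Euc n) (u : ℝ → Euc p) : Prop :=
  Measurable u ∧ (∀ᵐ t ∂(volume.restrict (Ici (0:ℝ))), u t ∈ Ω) ∧
  ∀ t, 0 ≤ t → y t = y 0 + ∫ s in (0:ℝ)..t, f (y s) (u s)

/-- A class-K function: continuous, (strictly) increasing on `[0,∞)`, nonnegative, vanishing at `0`. -/
def IsClassK (α : ℝ → ℝ) : Prop :=
  ContinuousOn α (Ici 0) ∧ StrictMonoOn α (Ici 0) ∧ α 0 = 0 ∧ ∀ s ∈ Ici (0:ℝ), 0 ≤ α s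

/-- Strict dissipativity at `(ȳ,ū)` with supply rate `w`, (bounded) storage function `S` and
class-K function `α`. -/
def StrictlyDissipative {n p : ℕ} (f : Euc n → Euc p → Euc n) (Ω : Set (Euc p))
    (w : Euc n → Euc p → ℝ) (ybar : Euc n) (ubar : Euc p)
    (S : Euc n → ℝ) (α : ℝ → ℝ) : Prop :=
  (∃ M, ∀ x, |S x| ≤ M) ∧ IsClassK α ∧
  ∀ T > (0:ℝ), ∀ y u, IsAdmissible f Ω T y u →
    S (y T) + ∫ t in (0:ℝ)..T, α ‖(y t - ybar, u t - ubar)‖ ≤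
      S (y 0) + ∫ t in (0:ℝ)..T, w (y t) (u t)

/-- The value function `v(T,x,z)` of the finite-horizon problem. -/
def valueFn {n p : ℕ} (f : Euc n → Euc p → Euc n) (f0 : Euc n → Euc p → ℝ)
    (Ω : Set (Euc p)) (T : ℝ) (x z : Euc n) : ℝ :=
  sInf {c | ∃ y u, IsAdmissible f Ω T y u ∧ y 0 = x ∧ y T = z ∧
    c = ∫ t in (0:ℝ)..T, f0 (y t) (u t)}

/-- The value of the shifted infinite-horizon problem with dynamics `f`, running cost `w`
and initial state `x` (the cost of an admissible pair is the limit of its partial costs). -/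
def vInf {n p : ℕ} (f : Euc n → Euc p → Euc n) (Ω : Set (Euc p))
    (w : Euc n → Euc p → ℝ) (x : Euc n) : ℝ :=
  sInf {c | ∃ y u, IsAdmissibleInf f Ω y u ∧ y 0 = x ∧
    Tendsto (fun T => ∫ t in (0:ℝ)..T, w (y t) (u t)) atTop (𝓝 c)}

/-- Times at which `ybar` can be reached from `x` by an admissible pair for `f`. -/
def reachTimes {n p : ℕ} (f : Euc n → Euc p → Euc n) (Ω : Set (Euc p))
    (x ybar : Euc n) : Set ℝ :=
  {t | 0 ≤ t ∧ ∃ y u, IsAdmissible f Ω t y u ∧ y 0 = x ∧ y t = ybar}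

/-- The minimum time to reach `ybar` from `x` with the dynamics `f`. -/
def minTime {n p : ℕ} (f : Euc n → Euc p → Euc n) (Ω : Set (Euc p))
    (x ybar : Euc n) : ℝ :=
  sInf (reachTimes f Ω x ybar)

set_option maxHeartbeats 2000000 in
/-- Lemma 5.5: a bounded admissible trajectory on `[0,∞)` with uniformly bounded
shifted costs converges to the turnpike `ȳ` (forward dynamics `f`). -/
theorem infinite_horizon_trajectory_tendsto_turnpike
    {n pp : ℕ} (c : ℝ)
    (f : Euc n → Euc pp → Euc n) (f0 : Euc n → Euc pp → ℝ)
    (Ω : Set (Euc pp))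
    (hf : ContDiff ℝ 1 (Function.uncurry f))
    (hf0 : ContDiff ℝ 1 (Function.uncurry f0))
    (hΩcpt : IsCompact Ω) (hΩball : Ω ⊆ closedBall 0 c)
    -- (ȳ,ū) is the unique minimizer of the static problem
    (ybar : Euc n) (ubar : Euc pp)
    (hfbar : f ybar ubar = 0)
    (hstatmin : ∀ y u, f y u = 0 → f0 ybar ubar ≤ f0 y u)
    (hstatuniq : ∀ y u, f y u = 0 → f0 y u = f0 ybar ubar → y = ybar ∧ u = ubar)
    -- shifted cost
    (w : Euc n → Euc pp → ℝ) (hwdef : w = fun y u => f0 y u - f0 ybar ubar)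
    (x : Euc n)
    (yf : ℝ → Euc n) (uf : ℝ → Euc pp)
    (hadm : IsAdmissibleInf f Ω yf uf) (hx0 : yf 0 = x)
    (b : ℝ) (hbnd : ∀ t, 0 ≤ t → ‖yf t‖ ≤ b)
    (M : ℝ) (hcst : ∀ T, 0 ≤ T → |∫ t in (0:ℝ)..T, w (yf t) (uf t)| ≤ M)
    (S : Euc n → ℝ) (α : ℝ → ℝ)
    (hdis : StrictlyDissipative f Ω w ybar ubar S α) :
    Tendsto yf atTop (𝓝 ybar) := by

  classical
  obtain ⟨humeas, huΩ, heqn⟩ := hadm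
  obtain ⟨⟨Ms, hMs⟩, ⟨hαc, hαm, hα0, hαnn⟩, hineq⟩ := hdis
  -- the velocity field along the trajectory
  set F : ℝ → Euc n := fun s => f (yf s) (uf s) with hF
  -- bound on f over the relevant compact set
  obtain ⟨L₀, hL₀⟩ := ((isCompact_closedBall (0 : Euc n) b).prod hΩcpt).exists_bound_of_continuousOn
    (hf.continuous.continuousOn)
  set L : ℝ := max L₀ 0 with hLdef
  have hL0 : 0 ≤ L := le_max_right _ _
  have hFb : ∀ᵐ s ∂(volume.restrict (Ici (0:ℝ))), ‖F s‖ ≤ L := by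
    filter_upwards [huΩ, ae_restrict_mem measurableSet_Ici] with s hs1 hs2
    have : ‖Function.uncurry f (yf s, uf s)‖ ≤ L₀ :=
      hL₀ (yf s, uf s) ⟨mem_closedBall_zero_iff.mpr (hbnd s hs2), hs1⟩
    exact le_trans this (le_max_left _ _)
  -- a.e. bound transferred to subintervals of [0,∞)
  have hFbsub : ∀ (s : Set ℝ), s ⊆ Ici (0:ℝ) →
      ∀ᵐ r ∂(volume.restrict s), ‖F r‖ ≤ L := fun s hs =>
    hFb.filter_mono (ae_mono (Measure.restrict_mono hs le_rfl))
  -- Step 1: F is interval integrable on every [0,t], t ≥ 0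
  have key : ∀ t, 0 ≤ t → IntervalIntegrable F volume 0 t := by
    by_contra hcon
    push_neg at hcon
    obtain ⟨t₀, ht₀0, ht₀⟩ := hcon
    set B : Set ℝ := {t | 0 ≤ t ∧ ¬ IntervalIntegrable F volume 0 t} with hBdef
    have hBne : B.Nonempty := ⟨t₀, ht₀0, ht₀⟩
    have hBbd : BddBelow B := ⟨0, fun t ht => ht.1⟩
    set τ : ℝ := sInf B with hτdef
    have hτ0 : 0 ≤ τ := le_csInf hBne (fun t ht => ht.1)
    have hgood : ∀ t, 0 ≤ t → t < τ → IntervalIntegrable F volume 0 t := by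
      intro t ht htτ
      by_contra h
      exact absurd (csInf_le hBbd ⟨ht, h⟩) (not_le.mpr htτ)
    have hup : ∀ t, τ < t → ¬ IntervalIntegrable F volume 0 t := by
      intro t ht hI
      obtain ⟨s, hsB, hst⟩ := (csInf_lt_iff hBbd hBne).mp ht
      exact hsB.2 (hI.mono_set (uIcc_subset_uIcc left_mem_uIcc
        (by rw [uIcc_of_le (hsB.1.trans hst.le)]; exact ⟨hsB.1, hst.le⟩)))
    have hconst : ∀ t, τ < t → yf t = x := by
      intro t ht
      have h0t : 0 ≤ t := hτ0.trans ht.le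
      have h2 := heqn t h0t
      rw [intervalIntegral.integral_undef (hup t ht)] at h2
      simpa [hx0] using h2
    have hcont : ContinuousOn yf (Ico 0 τ) := by
      intro t ht
      set t' : ℝ := (t + τ)/2 with ht'def
      have htt' : t < t' := by rw [ht'def]; linarith [ht.2]
      have ht'τ : t' < τ := by rw [ht'def]; linarith [ht.2]
      have ht'0 : 0 ≤ t' := le_trans ht.1 htt'.le
      have hII : IntegrableOn F (uIcc 0 t') volume := by
        rw [uIcc_of_le ht'0, integrableOn_Icc_iff_integrableOn_Ioc]
        exact (intervalIntegrable_iff_integrableOn_Ioc_of_le ht'0).mp (hgood t' ht'0 ht'τ)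
      have hprim : ContinuousOn (fun r => yf 0 + ∫ s in (0:ℝ)..r, F s) (Icc 0 t') := by
        have := intervalIntegral.continuousOn_primitive_interval (f := F) (a := 0) (b := t')
          (μ := volume) hII
        rw [uIcc_of_le ht'0] at this
        exact continuousOn_const.add this
      have hyc : ContinuousOn yf (Icc 0 t') :=
        hprim.congr (fun s hs => heqn s hs.1)
      refine (hyc t ⟨ht.1, htt'.le⟩).mono_of_mem_nhdsWithin ?_
      have h1 : Iio t' ∈ nhdsWithin t (Ico 0 τ) := nhdsWithin_le_nhds (Iio_mem_nhds htt')
      filter_upwards [h1, self_mem_nhdsWithin] with s hs1 hs2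
      exact ⟨hs2.1, hs1.le⟩
    -- yf is a.e. strongly measurable on (0, τ+1]
    have hyae : AEStronglyMeasurable yf (volume.restrict (Ioc 0 (τ+1))) := by
      have a1 : AEStronglyMeasurable yf (volume.restrict (Ico 0 τ)) :=
        hcont.aestronglyMeasurable measurableSet_Ico
      have a2 : AEStronglyMeasurable yf (volume.restrict (Ioi τ)) := by
        refine (aestronglyMeasurable_const (b := x)).congr ?_
        exact (ae_restrict_iff' measurableSet_Ioi).mpr
          (ae_of_all _ (fun t ht => (hconst t ht).symm))
      have a3 : AEStronglyMeasurable yf (volume.restrict {τ}) := by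
        rw [Measure.restrict_eq_zero.mpr (measure_singleton τ)]
        exact aestronglyMeasurable_zero_measure yf
      have hsub : Ioc 0 (τ+1) ⊆ (Ico 0 τ ∪ Ioi τ) ∪ {τ} := by
        intro s hs
        rcases lt_trichotomy s τ with h | h | h
        · exact Or.inl (Or.inl ⟨hs.1.le, h⟩)
        · exact Or.inr (by simp [h])
        · exact Or.inl (Or.inr h)
      have hmeas : AEStronglyMeasurable yf
          (volume.restrict ((Ico 0 τ ∪ Ioi τ) ∪ {τ})) := by
        refine AEStronglyMeasurable.mono_measure ((a1.add_measure a2).add_measure a3) ?_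
        refine le_trans (Measure.restrict_union_le _ _) ?_
        exact add_le_add (Measure.restrict_union_le _ _) le_rfl
      exact hmeas.mono_measure (Measure.restrict_mono hsub le_rfl)
    have hFae : AEStronglyMeasurable F (volume.restrict (Ioc 0 (τ+1))) :=
      hf.continuous.comp_aestronglyMeasurable
        (hyae.prodMk (humeas.aestronglyMeasurable))
    have hFint : IntegrableOn F (Ioc 0 (τ+1)) volume := by
      refine Integrable.mono' (g := fun _ => L) (integrable_const L) hFae ?_
      exact hFbsub _ (fun s hs => hs.1.le)
    have hII2 : IntervalIntegrable F volume 0 (τ+1) :=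
      (intervalIntegrable_iff_integrableOn_Ioc_of_le (by linarith)).mpr hFint
    exact hup (τ+1) (by linarith) hII2
  -- Step 2: yf is continuous on [0,∞) and L-Lipschitz there
  have hycont : ContinuousOn yf (Ici 0) := by
    intro t ht
    have hII : IntegrableOn F (uIcc 0 (t+1)) volume := by
      rw [uIcc_of_le (by linarith [mem_Ici.mp ht] : (0:ℝ) ≤ t+1),
        integrableOn_Icc_iff_integrableOn_Ioc]
      exact (intervalIntegrable_iff_integrableOn_Ioc_of_le
        (by linarith [mem_Ici.mp ht])).mp (key (t+1) (by linarith [mem_Ici.mp ht]))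
    have hprim : ContinuousOn (fun r => yf 0 + ∫ s in (0:ℝ)..r, F s) (Icc 0 (t+1)) := by
      have := intervalIntegral.continuousOn_primitive_interval (f := F) (a := 0)
        (b := t+1) (μ := volume) hII
      rw [uIcc_of_le (by linarith [mem_Ici.mp ht] : (0:ℝ) ≤ t+1)] at this
      exact continuousOn_const.add this
    have hyc : ContinuousOn yf (Icc 0 (t+1)) := hprim.congr (fun s hs => heqn s hs.1)
    refine (hyc t ⟨mem_Ici.mp ht, by linarith [mem_Ici.mp ht]⟩).mono_of_mem_nhdsWithin ?_
    have h1 : Iio (t+1) ∈ nhdsWithin t (Ici 0) :=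
      nhdsWithin_le_nhds (Iio_mem_nhds (by linarith [mem_Ici.mp ht]))
    filter_upwards [h1, self_mem_nhdsWithin] with s hs1 hs2
    exact ⟨hs2, hs1.le⟩
  have hLip : ∀ s t : ℝ, 0 ≤ s → s ≤ t → ‖yf t - yf s‖ ≤ L * (t - s) := by
    intro s t hs hst
    have ht0 : 0 ≤ t := hs.trans hst
    have hIs := key s hs
    have hIt := key t ht0
    have hdiff : yf t - yf s = ∫ r in s..t, F r := by
      rw [heqn t ht0, heqn s hs]
      rw [add_sub_add_left_eq_sub]
      exact intervalIntegral.integral_interval_sub_left hIt hIs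
    rw [hdiff]
    have hb2 : ∀ᵐ r ∂(volume.restrict (uIoc s t)), ‖F r‖ ≤ L := by
      refine hFbsub _ ?_
      rw [uIoc_of_le hst]
      exact fun r hr => le_trans hs hr.1.le
    have := intervalIntegral.norm_integral_le_abs_of_norm_le hb2
      (intervalIntegrable_const (c := L))
    rw [intervalIntegral.integral_const, smul_eq_mul] at this
    calc ‖∫ r in s..t, F r‖ ≤ |(t - s) * L| := this
    _ = L * (t - s) := by rw [abs_of_nonneg (mul_nonneg (by linarith) hL0)]; ring
  -- Step 3: the dissipation integrand
  set g : ℝ → ℝ := fun t => α ‖(yf t - ybar, uf t - ubar)‖ with hgdef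
  have hgnn : ∀ t, 0 ≤ g t := fun t => hαnn _ (norm_nonneg _)
  -- continuity of an extension of α
  set α' : ℝ → ℝ := fun s => α (max s 0) with hα'def
  have hα'c : Continuous α' :=
    hαc.comp_continuous (continuous_id.max continuous_const) (fun s => le_max_right s 0)
  have hgα' : g = fun t => α' ‖(yf t - ybar, uf t - ubar)‖ := by
    funext t
    simp only [hgdef, hα'def, max_eq_left (norm_nonneg _)]
  -- uniform a.e. bound on g over [0,∞)
  have hb0 : 0 ≤ b := le_trans (norm_nonneg _) (hbnd 0 le_rfl)
  set R : ℝ := max (b + ‖ybar‖) (c + ‖ubar‖) with hRdef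
  have hR0 : 0 ≤ R := le_trans (by positivity) (le_max_left _ _)
  obtain ⟨A, hA⟩ := (isCompact_Icc (a := (0:ℝ)) (b := R)).exists_bound_of_continuousOn
    (hαc.mono (fun s hs => hs.1))
  have hgbd : ∀ᵐ t ∂(volume.restrict (Ici (0:ℝ))), ‖g t‖ ≤ A := by
    filter_upwards [huΩ, ae_restrict_mem measurableSet_Ici] with t ht1 ht2
    have h1 : ‖yf t - ybar‖ ≤ b + ‖ybar‖ :=
      le_trans (norm_sub_le _ _) (add_le_add (hbnd t ht2) le_rfl)
    have h2 : ‖uf t - ubar‖ ≤ c + ‖ubar‖ :=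
      le_trans (norm_sub_le _ _)
        (add_le_add (mem_closedBall_zero_iff.mp (hΩball ht1)) le_rfl)
    have h3 : ‖(yf t - ybar, uf t - ubar)‖ ≤ R := by
      rw [Prod.norm_def]
      exact max_le (h1.trans (le_max_left _ _)) (h2.trans (le_max_right _ _))
    exact hA _ ⟨norm_nonneg _, h3⟩
  -- g is interval integrable on subintervals of [0,∞)
  have hgint : ∀ a t : ℝ, 0 ≤ a → a ≤ t → IntervalIntegrable g volume a t := by
    intro a t ha hat
    refine (intervalIntegrable_iff_integrableOn_Ioc_of_le hat).mpr ?_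
    have hsub : Ioc a t ⊆ Ici (0:ℝ) := fun r hr => le_trans ha hr.1.le
    have hyae : AEStronglyMeasurable yf (volume.restrict (Ioc a t)) :=
      (hycont.aestronglyMeasurable measurableSet_Ici).mono_measure
        (Measure.restrict_mono hsub le_rfl)
    have hgae : AEStronglyMeasurable g (volume.restrict (Ioc a t)) := by
      rw [hgα']
      exact hα'c.comp_aestronglyMeasurable
        (continuous_norm.comp_aestronglyMeasurable
          ((hyae.sub aestronglyMeasurable_const).prodMk
            ((humeas.aestronglyMeasurable).sub aestronglyMeasurable_const)))
    refine Integrable.mono' (g := fun _ => A) (integrable_const A) hgae ?_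
    exact hgbd.filter_mono (ae_mono (Measure.restrict_mono hsub le_rfl))
  -- Step 4: the total dissipation is bounded
  have hM0 : 0 ≤ M := le_trans (abs_nonneg _) (hcst 0 le_rfl)
  have hMs0 : 0 ≤ Ms := le_trans (abs_nonneg _) (hMs x)
  set I : ℝ → ℝ := fun T => ∫ t in (0:ℝ)..T, g t with hIdef
  have hIC : ∀ T, 0 ≤ T → I T ≤ 2*Ms + M := by
    intro T hT
    rcases eq_or_lt_of_le hT with h | h
    · simp only [hIdef, ← h, intervalIntegral.integral_same]
      linarith
    · have hadmT : IsAdmissible f Ω T yf uf := by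
        refine ⟨humeas, ?_, fun t ht => heqn t ht.1⟩
        exact huΩ.filter_mono (ae_mono (Measure.restrict_mono Icc_subset_Ici_self le_rfl))
      have h1 := hineq T h yf uf hadmT
      have h2 := abs_le.mp (hMs (yf 0))
      have h3 := abs_le.mp (hMs (yf T))
      have h4 := abs_le.mp (hcst T hT)
      simp only [hIdef, hgdef]
      linarith
  have hImono : ∀ a t : ℝ, 0 ≤ a → a ≤ t → I a ≤ I t := by
    intro a t ha hat
    have h1 : I t - I a = ∫ r in a..t, g r :=
      intervalIntegral.integral_interval_sub_left (hgint 0 t (le_refl 0) (ha.trans hat))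
        (hgint 0 a (le_refl 0) ha)
    have h2 : 0 ≤ ∫ r in a..t, g r :=
      intervalIntegral.integral_nonneg hat (fun r _ => hgnn r)
    linarith
  -- Step 5: conclude by contradiction (Barbalat-type argument)
  by_contra hnot
  rw [Metric.tendsto_atTop] at hnot
  push_neg at hnot
  obtain ⟨ε, hε, hbad⟩ := hnot
  set δ : ℝ := ε / (2*(L+1)) with hδdef
  have hL1 : (0:ℝ) < 2*(L+1) := by linarith
  have hδpos : 0 < δ := div_pos hε hL1
  have hεδ : ε = δ * (2*(L+1)) := (div_mul_cancel₀ ε (ne_of_gt hL1)).symm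
  set η : ℝ := α (ε/2) with hηdef
  have hηpos : 0 < η := by
    rw [hηdef, ← hα0]
    exact hαm self_mem_Ici (by positivity : (0:ℝ) ≤ ε/2) (by positivity)
  -- the supremum of the (monotone, bounded) partial integrals
  have hne : (I '' Ici 0).Nonempty := ⟨I 0, 0, self_mem_Ici, rfl⟩
  have hbdd : BddAbove (I '' Ici 0) := ⟨2*Ms + M, by
    rintro _ ⟨T, hT, rfl⟩; exact hIC T hT⟩
  set ℓ : ℝ := sSup (I '' Ici 0) with hℓdef
  obtain ⟨_, ⟨T₀, hT₀0, rfl⟩, hT₀gt⟩ := exists_lt_of_lt_csSup hne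
    (show ℓ - η*δ < ℓ by nlinarith)
  obtain ⟨t, htN, htbad⟩ := hbad (max T₀ 0)
  have ht0 : 0 ≤ t := le_trans (le_max_right _ _) htN
  have htT₀ : T₀ ≤ t := le_trans (le_max_left _ _) htN
  -- on the window [t, t+δ] the integrand is at least η
  have hwin : ∀ s ∈ Icc t (t+δ), η ≤ g s := by
    intro s hs
    have h1 : ‖yf s - yf t‖ ≤ L * δ :=
      le_trans (hLip t s ht0 hs.1) (mul_le_mul_of_nonneg_left (by linarith [hs.2]) hL0)
    have h3 : ε ≤ ‖yf t - ybar‖ := by rwa [dist_eq_norm] at htbad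
    have h4 : L * δ ≤ ε/2 := by
      rw [hεδ]; nlinarith
    have h5 : ‖yf t - ybar‖ - ‖yf s - ybar‖ ≤ ‖yf t - yf s‖ := by
      have := norm_sub_norm_le (yf t - ybar) (yf s - ybar)
      rwa [sub_sub_sub_cancel_right] at this
    have h6 : ‖yf t - yf s‖ = ‖yf s - yf t‖ := norm_sub_rev _ _
    have h2 : ε/2 ≤ ‖yf s - ybar‖ := by linarith
    have h7 : ε/2 ≤ ‖(yf s - ybar, uf s - ubar)‖ :=
      le_trans h2 (by simpa using norm_fst_le (yf s - ybar, uf s - ubar))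
    exact (hαm.monotoneOn) (by positivity : (0:ℝ) ≤ ε/2)
      (le_trans (by positivity) h7) h7
  have hwint : η * δ ≤ I (t+δ) - I t := by
    have heq : I (t+δ) - I t = ∫ s in t..(t+δ), g s :=
      intervalIntegral.integral_interval_sub_left
        (hgint 0 (t+δ) (le_refl 0) (by linarith))
        (hgint 0 t (le_refl 0) ht0)
    rw [heq]
    calc η * δ = ∫ _ in t..(t+δ), η := by
          rw [intervalIntegral.integral_const, smul_eq_mul]; ring
    _ ≤ ∫ s in t..(t+δ), g s :=
        intervalIntegral.integral_mono_on (by linarith) intervalIntegrable_const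
          (hgint t (t+δ) ht0 (by linarith)) hwin
  have hle1 : I (t+δ) ≤ ℓ := le_csSup hbdd ⟨t+δ, mem_Ici.mpr (by linarith), rfl⟩
  have hge : I T₀ ≤ I t := hImono T₀ t hT₀0 htT₀
  linarith
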